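/- Let D : ℕ → ℝ satisfy inf_{n≥1} D(n) > 0 and ∑_{n≥1} 1/D(n) = ∞, and set S(n) = ∑_{i=1}^n 1/D(i). Suppose S is regularly varying with index τ = 0, i.e., S(⌊xn⌋)/S(n) → 1 for every x > 0. Fix n₀ ≥ 1 and for m ≥ 1 let Φ(n,m) = ∑ 1/(D(j₁)D(j₂−j₁)⋯D(j_m−j_{m−1})) over 1 ≤ j₁ < ⋯ < j_m ≤ n with j_i − j_{i−1} ≥ n₀ (j₀ = 0). Then Φ(n,m)/S(n)^m → 1 as n → ∞, for every m ≥ 1. -/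

import Mathlib

open Filter

/-- The previous index: `prev j i = j (i-1)` with the convention `j₀ = 0`. -/
def prevIdx4 {m : ℕ} (j : Fin m → ℕ) (i : Fin m) : ℕ :=
  (Fin.cons 0 j : Fin (m + 1) → ℕ) (Fin.castSucc i)

/-- The multiple sum Φ(n,m) with gap condition n₀, for a real sequence D. -/
noncomputable def PhiR (D : ℕ → ℝ) (n₀ n m : ℕ) : ℝ :=
  ∑ j ∈ (Fintype.piFinset (fun _ : Fin m => Finset.Icc 1 n)).filter
      (fun j => ∀ i : Fin m, prevIdx4 j i + n₀ ≤ j i),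
    ∏ i : Fin m, 1 / D (j i - prevIdx4 j i)

lemma prevIdx4_mk_zero {m : ℕ} (j : Fin m → ℕ) (h : 0 < m) : prevIdx4 j ⟨0, h⟩ = 0 := by
  simp [prevIdx4]

lemma prevIdx4_mk_succ {m : ℕ} (j : Fin m → ℕ) (v : ℕ) (h : v + 1 < m) :
    prevIdx4 j ⟨v + 1, h⟩ = j ⟨v, by omega⟩ := by
  have : Fin.castSucc (⟨v + 1, h⟩ : Fin m) = Fin.succ ⟨v, by omega⟩ := by
    ext; simp
  rw [prevIdx4, this, Fin.cons_succ]

lemma Iio_mk_succ {m : ℕ} (v : ℕ) (h : v + 1 < m) :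
    Finset.Iio (⟨v + 1, h⟩ : Fin m) = Finset.Iic ⟨v, by omega⟩ := by
  ext k
  simp [Fin.lt_def, Fin.le_def, Nat.lt_succ_iff]

lemma sum_Iic_eq_Iio_add {m : ℕ} (d : Fin m → ℕ) (i : Fin m) :
    ∑ k ∈ Finset.Iic i, d k = (∑ k ∈ Finset.Iio i, d k) + d i := by
  rw [← Finset.Iio_insert, Finset.sum_insert (by simp), add_comm]

lemma prev_psum {m : ℕ} (d : Fin m → ℕ) (i : Fin m) :
    prevIdx4 (fun t => ∑ k ∈ Finset.Iic t, d k) i = ∑ k ∈ Finset.Iio i, d k := by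
  rcases i with ⟨v, hv⟩
  cases v with
  | zero =>
      have he : Finset.Iio (⟨0, hv⟩ : Fin m) = ∅ := by
        ext k; simp [Fin.lt_def]
      rw [prevIdx4_mk_zero _ (by omega), he, Finset.sum_empty]
  | succ v => rw [prevIdx4_mk_succ, Iio_mk_succ]

lemma psum_gaps {m : ℕ} (j : Fin m → ℕ) (hj : ∀ i, prevIdx4 j i ≤ j i) (i : Fin m) :
    ∑ k ∈ Finset.Iic i, (j k - prevIdx4 j k) = j i := by
  rcases i with ⟨v, hv⟩
  induction v with
  | zero =>
      have : Finset.Iic (⟨0, hv⟩ : Fin m) = {⟨0, hv⟩} := by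
        ext k; simp [Fin.le_def, Fin.ext_iff, Nat.le_zero]
      rw [this, Finset.sum_singleton, prevIdx4_mk_zero _ (by omega), Nat.sub_zero]
  | succ v ih =>
      rw [sum_Iic_eq_Iio_add, Iio_mk_succ, ih (by omega),
        prevIdx4_mk_succ j v hv]
      exact Nat.add_sub_cancel' (by simpa [prevIdx4_mk_succ j v hv] using hj ⟨v+1, hv⟩)

lemma PhiR_eq (D : ℕ → ℝ) (n₀ n m : ℕ) (hn₀ : 1 ≤ n₀) (hm : 1 ≤ m) :
    PhiR D n₀ n m =
      ∑ d ∈ (Fintype.piFinset (fun _ : Fin m => Finset.Icc n₀ n)).filter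
          (fun d => ∑ i : Fin m, d i ≤ n),
        ∏ i : Fin m, 1 / D (d i) := by
  unfold PhiR
  refine Finset.sum_nbij' (fun j i => j i - prevIdx4 j i)
    (fun d t => ∑ k ∈ Finset.Iic t, d k) ?_ ?_ ?_ ?_ ?_
  · intro j hj
    rw [Finset.mem_filter, Fintype.mem_piFinset] at hj ⊢
    obtain ⟨hmem, hgap⟩ := hj
    have hprev : ∀ i, prevIdx4 j i ≤ j i := fun i => le_trans (by omega) (hgap i)
    constructor
    · intro i
      show j i - prevIdx4 j i ∈ Finset.Icc n₀ n
      have h1 := (Finset.mem_Icc.mp (hmem i)).1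
      have h2 := (Finset.mem_Icc.mp (hmem i)).2
      have h3 := hgap i
      exact Finset.mem_Icc.mpr ⟨by omega, by omega⟩
    · show ∑ i : Fin m, (j i - prevIdx4 j i) ≤ n
      have hu : (Finset.univ : Finset (Fin m)) = Finset.Iic ⟨m - 1, by omega⟩ := by
        ext k; simp [Fin.le_def]; omega
      rw [hu, psum_gaps j hprev]
      exact (Finset.mem_Icc.mp (hmem _)).2
  · intro d hd
    rw [Finset.mem_filter, Fintype.mem_piFinset] at hd ⊢
    obtain ⟨hmem, hsum⟩ := hd
    constructor
    · intro i
      refine Finset.mem_Icc.mpr ⟨?_, ?_⟩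
      · calc 1 ≤ d i := le_trans hn₀ (Finset.mem_Icc.mp (hmem i)).1
          _ ≤ ∑ k ∈ Finset.Iic i, d k :=
            Finset.single_le_sum (fun k _ => Nat.zero_le _) (Finset.mem_Iic.mpr le_rfl)
      · calc ∑ k ∈ Finset.Iic i, d k ≤ ∑ k : Fin m, d k :=
            Finset.sum_le_sum_of_subset (Finset.subset_univ _)
          _ ≤ n := hsum
    · intro i
      show prevIdx4 (fun t => ∑ k ∈ Finset.Iic t, d k) i + n₀ ≤ ∑ k ∈ Finset.Iic i, d k
      rw [prev_psum, sum_Iic_eq_Iio_add]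
      have := (Finset.mem_Icc.mp (hmem i)).1
      omega
  · intro j hj
    rw [Finset.mem_filter] at hj
    have hprev : ∀ i, prevIdx4 j i ≤ j i := fun i => le_trans (by omega) (hj.2 i)
    funext i
    exact psum_gaps j hprev i
  · intro d hd
    funext i
    show (∑ k ∈ Finset.Iic i, d k) - prevIdx4 (fun t => ∑ k ∈ Finset.Iic t, d k) i = d i
    rw [prev_psum, sum_Iic_eq_Iio_add]
    omega
  · intro j hj
    rfl

theorem stmt_4 (D : ℕ → ℝ)
    (hinf : ∃ c : ℝ, 0 < c ∧ ∀ n, 1 ≤ n → c ≤ D n)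
    (hdiv : ¬ Summable (fun n : ℕ => 1 / D (n + 1)))
    (S : ℕ → ℝ) (hS : ∀ n, S n = ∑ i ∈ Finset.Icc 1 n, 1 / D i)
    (hslow : ∀ x : ℝ, 0 < x →
      Tendsto (fun n : ℕ => S ⌊x * n⌋₊ / S n) atTop (nhds 1))
    (n₀ : ℕ) (hn₀ : 1 ≤ n₀) (m : ℕ) (hm : 1 ≤ m) :
    Tendsto (fun n : ℕ => PhiR D n₀ n m / (S n) ^ m) atTop (nhds 1) := by
  obtain ⟨c, hc, hcD⟩ := hinf
  have hf : ∀ k, 1 ≤ k → 0 ≤ 1 / D k := fun k hk =>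
    div_nonneg zero_le_one (by linarith [hcD k hk])
  -- upper bound  Φ ≤ S(n)^m
  have hub : ∀ n, PhiR D n₀ n m ≤ (S n) ^ m := by
    intro n
    rw [PhiR_eq D n₀ n m hn₀ hm]
    have key : (∑ d ∈ Fintype.piFinset (fun _ : Fin m => Finset.Icc 1 n),
        ∏ i : Fin m, 1 / D (d i)) = (S n) ^ m := by
      have h := Finset.prod_univ_sum (fun _ : Fin m => Finset.Icc 1 n)
        (fun _ x => (1 : ℝ) / D x)
      rw [← h, Finset.prod_const, Finset.card_univ, Fintype.card_fin, hS n]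
    rw [← key]
    apply Finset.sum_le_sum_of_subset_of_nonneg
    · intro d hd
      rw [Finset.mem_filter, Fintype.mem_piFinset] at hd
      rw [Fintype.mem_piFinset]
      intro i
      have := Finset.mem_Icc.mp (hd.1 i)
      exact Finset.mem_Icc.mpr ⟨by omega, this.2⟩
    · intro d hd _
      refine Finset.prod_nonneg fun i _ => ?_
      rw [Fintype.mem_piFinset] at hd
      exact hf _ (Finset.mem_Icc.mp (hd i)).1
  -- lower bound
  have hlb : ∀ n, (∑ x ∈ Finset.Icc n₀ (n / m), 1 / D x) ^ m ≤ PhiR D n₀ n m := by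
    intro n
    rw [PhiR_eq D n₀ n m hn₀ hm]
    have key : (∑ x ∈ Finset.Icc n₀ (n / m), 1 / D x) ^ m
        = ∑ d ∈ Fintype.piFinset (fun _ : Fin m => Finset.Icc n₀ (n / m)),
            ∏ i : Fin m, 1 / D (d i) := by
      have h := Finset.prod_univ_sum (fun _ : Fin m => Finset.Icc n₀ (n / m))
        (fun _ x => (1 : ℝ) / D x)
      rw [← h, Finset.prod_const, Finset.card_univ, Fintype.card_fin]
    rw [key]
    apply Finset.sum_le_sum_of_subset_of_nonneg
    · intro d hd
      rw [Fintype.mem_piFinset] at hd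
      rw [Finset.mem_filter, Fintype.mem_piFinset]
      constructor
      · intro i
        have := Finset.mem_Icc.mp (hd i)
        exact Finset.mem_Icc.mpr ⟨this.1, le_trans this.2 (Nat.div_le_self n m)⟩
      · calc ∑ i : Fin m, d i ≤ ∑ _i : Fin m, n / m :=
              Finset.sum_le_sum (fun i _ => (Finset.mem_Icc.mp (hd i)).2)
          _ = m * (n / m) := by
              rw [Finset.sum_const, Finset.card_univ, Fintype.card_fin, smul_eq_mul]
          _ = n / m * m := mul_comm _ _
          _ ≤ n := Nat.div_mul_le_self n m
    · intro d hd _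
      refine Finset.prod_nonneg fun i _ => ?_
      rw [Finset.mem_filter, Fintype.mem_piFinset] at hd
      exact hf _ (le_trans hn₀ (Finset.mem_Icc.mp (hd.1 i)).1)
  -- S tends to infinity
  have hStop : Tendsto S atTop atTop := by
    have h := (not_summable_iff_tendsto_nat_atTop_of_nonneg
      (fun i => hf (i + 1) (by omega))).mp hdiv
    refine h.congr fun n => ?_
    rw [hS n, ← Finset.Ico_add_one_right_eq_Icc, Finset.sum_Ico_eq_sum_range]
    simp [add_comm]
  -- the two limit ingredients
  have hS1 : Tendsto (fun n : ℕ => S (n / m) / S n) atTop (nhds 1) := by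
    have hmR : (0 : ℝ) < (m : ℝ) := by exact_mod_cast hm
    have h := hslow (1 / m) (by positivity)
    refine h.congr fun n => ?_
    congr 2
    rw [one_div, inv_mul_eq_div, Nat.floor_div_natCast, Nat.floor_natCast]
  have hS0 : Tendsto (fun n : ℕ => S (n₀ - 1) / S n) atTop (nhds 0) :=
    Tendsto.div_atTop tendsto_const_nhds hStop
  have hL : Tendsto (fun n : ℕ => ((S (n / m) - S (n₀ - 1)) / S n) ^ m) atTop (nhds 1) := by
    have h : Tendsto (fun n : ℕ => (S (n / m) / S n - S (n₀ - 1) / S n) ^ m) atTop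
        (nhds 1) := by simpa using (hS1.sub hS0).pow m
    refine Tendsto.congr (fun n => ?_) h
    rw [sub_div]
  -- eventual bounds and squeeze
  have hev1 : ∀ᶠ n : ℕ in atTop, PhiR D n₀ n m / S n ^ m ≤ 1 := by
    filter_upwards [hStop.eventually_gt_atTop 0] with n hn
    rw [div_le_one (by positivity)]
    exact hub n
  have hev2 : ∀ᶠ n : ℕ in atTop,
      ((S (n / m) - S (n₀ - 1)) / S n) ^ m ≤ PhiR D n₀ n m / S n ^ m := by
    filter_upwards [hStop.eventually_gt_atTop 0, eventually_ge_atTop (m * n₀)] with n hpos hn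
    have hdm : n₀ ≤ n / m := (Nat.le_div_iff_mul_le (by omega)).mpr (by rw [mul_comm]; exact hn)
    have hsplit : S (n / m) - S (n₀ - 1) = ∑ x ∈ Finset.Icc n₀ (n / m), 1 / D x := by
      have e1 : Finset.Icc 1 (n / m) = Finset.Ioc 0 (n / m) := by
        rw [← Finset.Icc_add_one_left_eq_Ioc, zero_add]
      have e2 : Finset.Icc 1 (n₀ - 1) = Finset.Ioc 0 (n₀ - 1) := by
        rw [← Finset.Icc_add_one_left_eq_Ioc, zero_add]
      have e3 : Finset.Icc n₀ (n / m) = Finset.Ioc (n₀ - 1) (n / m) := by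
        rw [← Finset.Icc_add_one_left_eq_Ioc]; congr 1; omega
      rw [hS, hS, e1, e2, e3,
        ← Finset.sum_Ioc_consecutive _ (Nat.zero_le (n₀ - 1)) (by omega : n₀ - 1 ≤ n / m)]
      ring
    rw [div_pow]
    have hnum : (S (n / m) - S (n₀ - 1)) ^ m ≤ PhiR D n₀ n m := by
      rw [hsplit]; exact hlb n
    gcongr
  exact tendsto_of_tendsto_of_tendsto_of_le_of_le' hL tendsto_const_nhds hev2 hev1
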